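/- If a graph G can be edge-partitioned into two subgraphs F and H (i.e., E(G) is the disjoint union of E(F) and E(H)), then χ'_st(G) ≤ χ'_st(F) + χ'_s(H|_G), where χ'_s(H|_G) is the restricted strong chromatic index of H on G. -/

import Mathlib

open SimpleGraph

/-- A star edge-coloring with `k` colors: a proper edge-coloring such that no
path or cycle with four edges is bicolored. -/
def IsStarEdgeColoring {V : Type*} {k : ℕ} (G : SimpleGraph V) (c : Sym2 V → Fin k) : Prop :=
  (∀ ⦃e f : Sym2 V⦄, e ∈ G.edgeSet → f ∈ G.edgeSet → e ≠ f →
      (∃ v, v ∈ e ∧ v ∈ f) → c e ≠ c f) ∧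
  (∀ v0 v1 v2 v3 v4 : V, G.Adj v0 v1 → G.Adj v1 v2 → G.Adj v2 v3 → G.Adj v3 v4 →
      v0 ≠ v2 → v0 ≠ v3 → v1 ≠ v3 → v1 ≠ v4 → v2 ≠ v4 →
      ¬ (c s(v0, v1) = c s(v2, v3) ∧ c s(v1, v2) = c s(v3, v4)))

/-- The star chromatic index: the least `k` admitting a star `k`-edge-coloring. -/
noncomputable def starChromaticIndex {V : Type*} (G : SimpleGraph V) : ℕ :=
  sInf {k | ∃ c : Sym2 V → Fin k, IsStarEdgeColoring G c}

/-- A restricted-strong edge-coloring of H on G: edges of H at distance at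
most two in G get distinct colors. -/
def IsRestrictedStrongColoring {V : Type*} {k : ℕ} (G H : SimpleGraph V)
    (c : Sym2 V → Fin k) : Prop :=
  ∀ ⦃e f : Sym2 V⦄, e ∈ H.edgeSet → f ∈ H.edgeSet → e ≠ f →
    ((∃ v, v ∈ e ∧ v ∈ f) ∨
      ∃ g ∈ G.edgeSet, (∃ v, v ∈ e ∧ v ∈ g) ∧ (∃ v, v ∈ g ∧ v ∈ f)) →
    c e ≠ c f

noncomputable def restrictedStrongChromaticIndex {V : Type*} (G H : SimpleGraph V) : ℕ :=
  sInf {k | ∃ c : Sym2 V → Fin k, IsRestrictedStrongColoring G H c}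


lemma greedy_col : ∀ (n : ℕ) {W : Type*} [Fintype W] (A : SimpleGraph W) (m : ℕ),
    Fintype.card W ≤ n → (∀ w : W, {u | A.Adj w u}.ncard < m) →
    ∃ c : W → Fin m, ∀ u v : W, A.Adj u v → c u ≠ c v := by
  intro n
  induction n with
  | zero =>
    intro W _ A m hcard hdeg
    have : IsEmpty W := by
      rw [← Fintype.card_eq_zero_iff]; omega
    exact ⟨fun w => isEmptyElim w, fun u => isEmptyElim u⟩
  | succ n ih =>
    intro W _ A m hcard hdeg
    classical
    rcases isEmpty_or_nonempty W with hW | hW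
    · exact ⟨fun w => isEmptyElim w, fun u => isEmptyElim u⟩
    have hWn : Nonempty W := hW
    obtain ⟨w0⟩ := hWn
    set W' := {w : W // w ≠ w0} with hW'
    have hcard' : Fintype.card W' ≤ n := by
      have h1 : Fintype.card W' = Fintype.card W - 1 := by
        simp [W', Fintype.card_subtype_compl]
      have h2 : 1 ≤ Fintype.card W := Fintype.card_pos_iff.mpr hW
      omega
    have hdeg' : ∀ w : W', {u : W' | (A.comap Subtype.val).Adj w u}.ncard < m := by
      intro w
      have hinj : Set.InjOn (Subtype.val) {u : W' | (A.comap Subtype.val).Adj w u} :=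
        Subtype.val_injective.injOn
      have h1 : {u : W' | (A.comap Subtype.val).Adj w u}.ncard
          = ((Subtype.val) '' {u : W' | (A.comap Subtype.val).Adj w u}).ncard :=
        (Set.ncard_image_of_injOn hinj).symm
      have h2 : (Subtype.val) '' {u : W' | (A.comap Subtype.val).Adj w u}
          ⊆ {u : W | A.Adj w.val u} := by
        rintro x ⟨u, hu, rfl⟩; exact hu
      calc {u : W' | (A.comap Subtype.val).Adj w u}.ncard
          ≤ {u : W | A.Adj w.val u}.ncard := by rw [h1]; exact Set.ncard_le_ncard h2 (Set.toFinite _)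
        _ < m := hdeg _
    obtain ⟨c', hc'⟩ := ih (A.comap Subtype.val) m hcard' hdeg'
    have hfresh : ∃ b : Fin m, b ∉ c' '' {u : W' | A.Adj w0 u.val} := by
      by_contra hcon
      push_neg at hcon
      have huniv : (Set.univ : Set (Fin m)) ⊆ c' '' {u : W' | A.Adj w0 u.val} :=
        fun b _ => hcon b
      have h1 : m ≤ (c' '' {u : W' | A.Adj w0 u.val}).ncard := by
        have := Set.ncard_le_ncard huniv (Set.toFinite _)
        rwa [Set.ncard_univ, Nat.card_eq_fintype_card, Fintype.card_fin] at this
      have h2 : (c' '' {u : W' | A.Adj w0 u.val}).ncard ≤ {u : W' | A.Adj w0 u.val}.ncard :=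
        Set.ncard_image_le (Set.toFinite _)
      have h3 : {u : W' | A.Adj w0 u.val}.ncard ≤ {u : W | A.Adj w0 u}.ncard := by
        have hinj : Set.InjOn (Subtype.val) {u : W' | A.Adj w0 u.val} :=
          Subtype.val_injective.injOn
        rw [← Set.ncard_image_of_injOn hinj]
        refine Set.ncard_le_ncard ?_ (Set.toFinite _)
        rintro x ⟨u, hu, rfl⟩; exact hu
      have := hdeg w0
      omega
    obtain ⟨b, hb⟩ := hfresh
    refine ⟨fun w => if h : w = w0 then b else c' ⟨w, h⟩, ?_⟩
    intro u v huv
    by_cases hu : u = w0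
    · have hv : v ≠ w0 := fun h => (A.ne_of_adj huv) (hu.trans h.symm)
      simp only [dif_pos hu, dif_neg hv]
      intro h
      exact hb ⟨⟨v, hv⟩, hu ▸ huv, h.symm⟩
    by_cases hv : v = w0
    · simp only [dif_pos hv, dif_neg hu]
      intro h
      exact hb ⟨⟨u, hu⟩, hv ▸ huv.symm, h⟩
    · simp only [dif_neg hu, dif_neg hv]
      exact hc' ⟨u, hu⟩ ⟨v, hv⟩ huv

lemma exists_rsc {V : Type*} (G H : SimpleGraph V) (hsub : H.edgeSet ⊆ G.edgeSet)
    {k : ℕ} (c : Sym2 V → Fin k)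
    (hprop : ∀ ⦃e f : Sym2 V⦄, e ∈ G.edgeSet → f ∈ G.edgeSet → e ≠ f →
      (∃ v, v ∈ e ∧ v ∈ f) → c e ≠ c f) :
    ∃ m, ∃ ch : Sym2 V → Fin m, IsRestrictedStrongColoring G H ch := by
  classical
  let C : SimpleGraph (Sym2 V) :=
    { Adj := fun e f => e ≠ f ∧ e ∈ H.edgeSet ∧ f ∈ H.edgeSet ∧
        ((∃ v, v ∈ e ∧ v ∈ f) ∨
          ∃ g ∈ G.edgeSet, (∃ v, v ∈ e ∧ v ∈ g) ∧ (∃ v, v ∈ g ∧ v ∈ f))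
      symm := ⟨by
        rintro e f ⟨hne, he, hf, hS⟩
        refine ⟨hne.symm, hf, he, ?_⟩
        rcases hS with ⟨v, h1, h2⟩ | ⟨g, hg, ⟨v1, h1, h2⟩, ⟨v2, h3, h4⟩⟩
        · exact Or.inl ⟨v, h2, h1⟩
        · exact Or.inr ⟨g, hg, ⟨v2, h4, h3⟩, ⟨v1, h2, h1⟩⟩⟩
      loopless := ⟨fun e h => h.1 rfl⟩ }
  have hmem2 : ∀ (g : Sym2 V) (x y : V), g ∈ G.edgeSet → x ∈ g → y ∈ g → x ≠ y →
      G.Adj x y := by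
    intro g x y hg hx hy hxy
    induction g using Sym2.ind with
    | _ p q =>
      rw [Sym2.mem_iff] at hx hy
      have hgxy : s(p, q) = s(x, y) := by
        rcases hx with rfl | rfl <;> rcases hy with rfl | rfl
        · exact absurd rfl hxy
        · rfl
        · exact Sym2.eq_swap
        · exact absurd rfl hxy
      exact G.mem_edgeSet.mp (hgxy ▸ hg)
  have hvertinj : ∀ (x : V) (f f' : Sym2 V), f ∈ G.edgeSet → f' ∈ G.edgeSet →
      x ∈ f → x ∈ f' → c f = c f' → f = f' := by
    intro x f f' hf hf' hx hx' hcc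
    by_contra hne
    exact hprop hf hf' hne ⟨x, hx, hx'⟩ hcc
  set T := (Bool × Bool × Option (Fin k) × Option (Fin k)) × Fin k with hT
  set m := Nat.card T + 1 with hm
  have hdegC : ∀ e : Sym2 V, {f | C.Adj e f}.Finite ∧ {f | C.Adj e f}.ncard < m := by
    intro e
    induction e using Sym2.ind with
    | _ a b =>
      set ψ : V → Bool × Bool × Option (Fin k) × Option (Fin k) := fun x =>
        (if x = a then true else false, if x = b then true else false,
         if h : G.Adj a x then some (c s(a, x)) else none,
         if h : G.Adj b x then some (c s(b, x)) else none) with hψ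
      set Φ : Sym2 V → T := fun f =>
        (if h : ∃ x, x ∈ f ∧ (x = a ∨ x = b ∨ G.Adj a x ∨ G.Adj b x)
          then ψ (Classical.choose h) else default, c f) with hΦ
      have hP : ∀ f, C.Adj s(a, b) f →
          ∃ x, x ∈ f ∧ (x = a ∨ x = b ∨ G.Adj a x ∨ G.Adj b x) := by
        rintro f ⟨hne, he, hf, hS⟩
        rcases hS with ⟨v, hv1, hv2⟩ | ⟨g, hg, ⟨v1, hv1, hv2⟩, ⟨v2, hv3, hv4⟩⟩
        · refine ⟨v, hv2, ?_⟩
          rw [Sym2.mem_iff] at hv1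
          rcases hv1 with rfl | rfl
          · exact Or.inl rfl
          · exact Or.inr (Or.inl rfl)
        · refine ⟨v2, hv4, ?_⟩
          rw [Sym2.mem_iff] at hv1
          by_cases hvv : v1 = v2
          · subst hvv
            rcases hv1 with rfl | rfl
            · exact Or.inl rfl
            · exact Or.inr (Or.inl rfl)
          · have hadj : G.Adj v1 v2 := hmem2 g v1 v2 hg hv2 hv3 hvv
            rcases hv1 with rfl | rfl
            · exact Or.inr (Or.inr (Or.inl hadj))
            · exact Or.inr (Or.inr (Or.inr hadj))
      have hψinj : ∀ x x', (x = a ∨ x = b ∨ G.Adj a x ∨ G.Adj b x) →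
          (x' = a ∨ x' = b ∨ G.Adj a x' ∨ G.Adj b x') → ψ x = ψ x' → x = x' := by
        intro x x' _ _ heq
        simp only [ψ, Prod.mk.injEq] at heq
        obtain ⟨h1, h2, h3, h4⟩ := heq
        by_cases hxa : x = a
        · by_cases hx'a : x' = a
          · exact hxa.trans hx'a.symm
          · rw [if_pos hxa, if_neg hx'a] at h1
            exact absurd h1 (by simp)
        by_cases hxb : x = b
        · by_cases hx'b : x' = b
          · exact hxb.trans hx'b.symm
          · rw [if_pos hxb, if_neg hx'b] at h2
            exact absurd h2 (by simp)
        by_cases hax : G.Adj a x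
        · by_cases hax' : G.Adj a x'
          · simp only [dif_pos hax, dif_pos hax', Option.some.injEq] at h3
            have := hvertinj a s(a, x) s(a, x') (G.mem_edgeSet.mpr hax)
              (G.mem_edgeSet.mpr hax') (Sym2.mem_mk_left a x)
              (Sym2.mem_mk_left a x') h3
            rw [Sym2.eq_iff] at this
            rcases this with ⟨_, h⟩ | ⟨h, h'⟩
            · exact h
            · exact absurd h' hxa
          · simp [hax, hax'] at h3
        by_cases hbx : G.Adj b x
        · by_cases hbx' : G.Adj b x'
          · simp only [dif_pos hbx, dif_pos hbx', Option.some.injEq] at h4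
            have := hvertinj b s(b, x) s(b, x') (G.mem_edgeSet.mpr hbx)
              (G.mem_edgeSet.mpr hbx') (Sym2.mem_mk_left b x)
              (Sym2.mem_mk_left b x') h4
            rw [Sym2.eq_iff] at this
            rcases this with ⟨_, h⟩ | ⟨h, h'⟩
            · exact h
            · exact absurd h' hxb
          · simp [hbx, hbx'] at h4
        · rename_i hx _
          rcases hx with h | h | h | h
          · exact absurd h hxa
          · exact absurd h hxb
          · exact absurd h hax
          · exact absurd h hbx
      have hinj : Set.InjOn Φ {f | C.Adj s(a, b) f} := by
        intro f hf f' hf' heq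
        have h1 := hP f hf
        have h2 := hP f' hf'
        rw [hΦ] at heq
        dsimp only at heq
        rw [dif_pos h1, dif_pos h2] at heq
        obtain ⟨hψeq, hcc⟩ := Prod.ext_iff.mp heq
        obtain ⟨hx1, hx2⟩ := Classical.choose_spec h1
        obtain ⟨hx1', hx2'⟩ := Classical.choose_spec h2
        have hxx : Classical.choose h1 = Classical.choose h2 := hψinj _ _ hx2 hx2' hψeq
        have hfH : f ∈ H.edgeSet := hf.2.2.1
        have hfH' : f' ∈ H.edgeSet := hf'.2.2.1
        exact hvertinj (Classical.choose h1) f f' (hsub hfH) (hsub hfH') hx1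
          (hxx ▸ hx1') hcc
      have hfin : ({f | C.Adj s(a, b) f}).Finite :=
        Set.Finite.of_finite_image (Set.toFinite _) hinj
      have hcard : ({f | C.Adj s(a, b) f}).ncard ≤ Nat.card T := by
        rw [← Set.ncard_image_of_injOn hinj]
        calc (Φ '' {f | C.Adj s(a, b) f}).ncard
            ≤ (Set.univ : Set T).ncard :=
              Set.ncard_le_ncard (Set.subset_univ _) Set.finite_univ
          _ = Nat.card T := Set.ncard_univ T
      exact ⟨hfin, by omega⟩
  have hhom : ∀ C' : C.Subgraph, C'.verts.Finite →
      C'.coe →g (⊤ : SimpleGraph (Fin m)) := by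
    intro C' hfin
    haveI := hfin.fintype
    have hdeg : ∀ w : C'.verts, {u | C'.coe.Adj w u}.ncard < m := by
      intro w
      have hsub2 : Subtype.val '' {u | C'.coe.Adj w u} ⊆ {f | C.Adj w.val f} := by
        rintro _ ⟨u, hu, rfl⟩
        exact C'.adj_sub hu
      calc {u | C'.coe.Adj w u}.ncard
          = (Subtype.val '' {u | C'.coe.Adj w u}).ncard :=
            (Set.ncard_image_of_injOn Subtype.val_injective.injOn).symm
        _ ≤ {f | C.Adj w.val f}.ncard := Set.ncard_le_ncard hsub2 (hdegC w.val).1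
        _ < m := (hdegC w.val).2
    have hex : Nonempty (C'.coe →g (⊤ : SimpleGraph (Fin m))) := by
      obtain ⟨c0, hc0⟩ := greedy_col (Fintype.card C'.verts) C'.coe m le_rfl hdeg
      exact ⟨⟨c0, fun {u v} h => by simp only [top_adj]; exact hc0 u v h⟩⟩
    exact hex.some
  obtain ⟨φ⟩ := SimpleGraph.nonempty_hom_of_forall_finite_subgraph_hom hhom
  refine ⟨m, fun e => φ e, ?_⟩
  intro e f he hf hne hrel
  have hadj : C.Adj e f := ⟨hne, he, hf, hrel⟩
  simpa using φ.map_rel hadj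

lemma fin_natAdd_castAdd_ne {k₁ k₂ : ℕ} (x : Fin k₂) (y : Fin k₁) :
    Fin.natAdd k₁ x ≠ Fin.castAdd k₂ y := by
  intro h
  have h1 := congrArg Fin.val h
  have h2 := y.isLt
  simp only [Fin.coe_natAdd, Fin.coe_castAdd] at h1
  omega

lemma fin_natAdd_inj {k₁ k₂ : ℕ} {x y : Fin k₂} (h : Fin.natAdd k₁ x = Fin.natAdd k₁ y) :
    x = y := by
  have h1 := congrArg Fin.val h
  simp only [Fin.coe_natAdd] at h1
  exact Fin.ext (by omega)

lemma fin_castAdd_inj {k₁ k₂ : ℕ} {x y : Fin k₁} (h : Fin.castAdd k₂ x = Fin.castAdd k₂ y) :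
    x = y := by
  have h1 := congrArg Fin.val h
  simp only [Fin.coe_castAdd] at h1
  exact Fin.ext h1

lemma star_restrict {V : Type*} {F G : SimpleGraph V} (hsub : F.edgeSet ⊆ G.edgeSet)
    {k : ℕ} {c : Sym2 V → Fin k} (hc : IsStarEdgeColoring G c) : IsStarEdgeColoring F c := by
  have hadj : ∀ {u v : V}, F.Adj u v → G.Adj u v := fun h =>
    G.mem_edgeSet.mp (hsub (F.mem_edgeSet.mpr h))
  constructor
  · intro e f he hf hne hsh
    exact hc.1 (hsub he) (hsub hf) hne hsh
  · intro v0 v1 v2 v3 v4 h1 h2 h3 h4 d1 d2 d3 d4 d5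
    exact hc.2 v0 v1 v2 v3 v4 (hadj h1) (hadj h2) (hadj h3) (hadj h4) d1 d2 d3 d4 d5

lemma combine_colorings {V : Type*} {G F H : SimpleGraph V}
    (hUnion : G.edgeSet = F.edgeSet ∪ H.edgeSet)
    {k₁ k₂ : ℕ} {cF : Sym2 V → Fin k₁} {cH : Sym2 V → Fin k₂}
    (hcF : IsStarEdgeColoring F cF) (hcH : IsRestrictedStrongColoring G H cH) :
    ∃ c : Sym2 V → Fin (k₁ + k₂), IsStarEdgeColoring G c := by
  classical
  refine ⟨fun e => if e ∈ H.edgeSet then Fin.natAdd k₁ (cH e) else Fin.castAdd k₂ (cF e), ?_, ?_⟩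
  · intro e f he hf hne hsh
    by_cases heH : e ∈ H.edgeSet
    · by_cases hfH : f ∈ H.edgeSet
      · simp only [if_pos heH, if_pos hfH]
        intro h
        exact hcH heH hfH hne (Or.inl hsh) (fin_natAdd_inj h)
      · simp only [if_pos heH, if_neg hfH]
        exact fin_natAdd_castAdd_ne _ _
    · by_cases hfH : f ∈ H.edgeSet
      · simp only [if_neg heH, if_pos hfH]
        exact (fin_natAdd_castAdd_ne _ _).symm
      · simp only [if_neg heH, if_neg hfH]
        have heF : e ∈ F.edgeSet := by
          rw [hUnion] at he
          rcases he with h | h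
          · exact h
          · exact absurd h heH
        have hfF : f ∈ F.edgeSet := by
          rw [hUnion] at hf
          rcases hf with h | h
          · exact h
          · exact absurd h hfH
        intro h
        exact hcF.1 heF hfF hne hsh (fin_castAdd_inj h)
  · intro v0 v1 v2 v3 v4 h01 h12 h23 h34 d02 d03 d13 d14 d24
    rintro ⟨hA, hB⟩
    dsimp only at hA hB
    have m01 : s(v0, v1) ∈ G.edgeSet := G.mem_edgeSet.mpr h01
    have m12 : s(v1, v2) ∈ G.edgeSet := G.mem_edgeSet.mpr h12
    have m23 : s(v2, v3) ∈ G.edgeSet := G.mem_edgeSet.mpr h23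
    have m34 : s(v3, v4) ∈ G.edgeSet := G.mem_edgeSet.mpr h34
    have hne13 : s(v0, v1) ≠ s(v2, v3) := by
      intro h
      rcases Sym2.eq_iff.mp h with ⟨h1, _⟩ | ⟨h1, _⟩
      · exact d02 h1
      · exact d03 h1
    have hne24 : s(v1, v2) ≠ s(v3, v4) := by
      intro h
      rcases Sym2.eq_iff.mp h with ⟨h1, _⟩ | ⟨h1, _⟩
      · exact d13 h1
      · exact d14 h1
    by_cases h1H : s(v0, v1) ∈ H.edgeSet
    · have h3H : s(v2, v3) ∈ H.edgeSet := by
        by_contra hc3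
        rw [if_pos h1H, if_neg hc3] at hA
        exact fin_natAdd_castAdd_ne _ _ hA
      rw [if_pos h1H, if_pos h3H] at hA
      refine hcH h1H h3H hne13 (Or.inr ⟨s(v1, v2), m12, ⟨v1, ?_, ?_⟩, ⟨v2, ?_, ?_⟩⟩)
        (fin_natAdd_inj hA) <;> simp [Sym2.mem_iff]
    · have h3H : s(v2, v3) ∉ H.edgeSet := by
        intro hc3
        rw [if_neg h1H, if_pos hc3] at hA
        exact fin_natAdd_castAdd_ne _ _ hA.symm
      by_cases h2H : s(v1, v2) ∈ H.edgeSet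
      · have h4H : s(v3, v4) ∈ H.edgeSet := by
          by_contra hc4
          rw [if_pos h2H, if_neg hc4] at hB
          exact fin_natAdd_castAdd_ne _ _ hB
        rw [if_pos h2H, if_pos h4H] at hB
        refine hcH h2H h4H hne24 (Or.inr ⟨s(v2, v3), m23, ⟨v2, ?_, ?_⟩, ⟨v3, ?_, ?_⟩⟩)
          (fin_natAdd_inj hB) <;> simp [Sym2.mem_iff]
      · have h4H : s(v3, v4) ∉ H.edgeSet := by
          intro hc4
          rw [if_neg h2H, if_pos hc4] at hB
          exact fin_natAdd_castAdd_ne _ _ hB.symm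
        rw [if_neg h1H, if_neg h3H] at hA
        rw [if_neg h2H, if_neg h4H] at hB
        have toF : ∀ {u v : V}, G.Adj u v → s(u, v) ∉ H.edgeSet → F.Adj u v := by
          intro u v h hn
          have hm := G.mem_edgeSet.mpr h
          rw [hUnion] at hm
          rcases hm with hm | hm
          · exact F.mem_edgeSet.mp hm
          · exact absurd hm hn
        exact hcF.2 v0 v1 v2 v3 v4 (toF h01 h1H) (toF h12 h2H) (toF h23 h3H) (toF h34 h4H)
          d02 d03 d13 d14 d24 ⟨fin_castAdd_inj hA, fin_castAdd_inj hB⟩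

theorem star_chromatic_index_edge_partition {V : Type*} (G F H : SimpleGraph V)
    (hUnion : G.edgeSet = F.edgeSet ∪ H.edgeSet)
    (hDisj : Disjoint F.edgeSet H.edgeSet) :
    starChromaticIndex G ≤ starChromaticIndex F + restrictedStrongChromaticIndex G H := by
  by_cases hG : {k | ∃ c : Sym2 V → Fin k, IsStarEdgeColoring G c}.Nonempty
  · obtain ⟨k, c, hc⟩ := hG
    have hFsub : F.edgeSet ⊆ G.edgeSet := hUnion ▸ Set.subset_union_left
    have hHsub : H.edgeSet ⊆ G.edgeSet := hUnion ▸ Set.subset_union_right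
    have hFne : {k | ∃ c : Sym2 V → Fin k, IsStarEdgeColoring F c}.Nonempty :=
      ⟨k, c, star_restrict hFsub hc⟩
    obtain ⟨m, ch, hch⟩ := exists_rsc G H hHsub c hc.1
    have hHne : {k | ∃ c : Sym2 V → Fin k, IsRestrictedStrongColoring G H c}.Nonempty :=
      ⟨m, ch, hch⟩
    have h1 := Nat.sInf_mem hFne
    have h2 := Nat.sInf_mem hHne
    obtain ⟨cF, hcF⟩ := h1
    obtain ⟨cH, hcH⟩ := h2
    obtain ⟨cc, hcc⟩ := combine_colorings hUnion hcF hcH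
    exact Nat.sInf_le ⟨cc, hcc⟩
  · rw [starChromaticIndex, Set.not_nonempty_iff_eq_empty.mp hG, Nat.sInf_empty]
    exact Nat.zero_le _
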